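/- Let K_t, K : [0,1] → ℝ with K_t → K uniformly, each K_t and K nondecreasing and M-Lipschitz, and let z : (0,1) → ℝ be a bounded function that is ladcag (left-continuous with right limits) on a compact interval [δ, 1−δ]. Then ∫_δ^{1−δ} z d(K_t − K) → 0 as t → 0, where the integrals are Lebesgue–Stieltjes integrals. -/

import Mathlib

open MeasureTheory Set Filter Topology
open scoped ENNReal NNReal

/-- A Stieltjes function that is `M`-Lipschitz has measure dominated by `M • volume`. -/
private lemma stieltjes_lip_le (M : ℝ≥0) (F : StieltjesFunction ℝ) (hF : LipschitzWith M F) :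
    F.measure ≤ (M : ℝ≥0∞) • (volume : Measure ℝ) := by
  have hsub : ∀ x y : ℝ, x ≤ y → F y - F x ≤ (M : ℝ) * (y - x) := by
    intro x y hxy
    have h := hF.dist_le_mul y x
    rw [Real.dist_eq, Real.dist_eq] at h
    have h2 : |y - x| = y - x := abs_of_nonneg (by linarith)
    rw [h2] at h
    exact (le_abs_self _).trans h
  set G : StieltjesFunction ℝ :=
    { toFun := fun x => (M : ℝ) * x - F x
      mono' := fun x y hxy => by
        have := hsub x y hxy
        simp only
        linarith
      right_continuous' := fun x =>
        ((continuous_const.mul continuous_id).sub hF.continuous).continuousWithinAt } with hGdef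
  have hG : ∀ x, G x = (M : ℝ) * x - F x := fun _ => rfl
  haveI : IsLocallyFiniteMeasure (F.measure + G.measure) := by
    constructor
    intro x
    refine ⟨Ioo (x - 1) (x + 1), Ioo_mem_nhds (by linarith) (by linarith), ?_⟩
    refine lt_of_le_of_lt (measure_mono Ioo_subset_Ioc_self) ?_
    rw [Measure.add_apply, StieltjesFunction.measure_Ioc, StieltjesFunction.measure_Ioc]
    exact ENNReal.add_lt_top.2 ⟨ENNReal.ofReal_lt_top, ENNReal.ofReal_lt_top⟩
  have hext : F.measure + G.measure = (M : ℝ≥0∞) • (volume : Measure ℝ) := by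
    refine Measure.ext_of_Ioc _ _ (fun a b hab => ?_)
    rw [Measure.add_apply, StieltjesFunction.measure_Ioc, StieltjesFunction.measure_Ioc,
      Measure.smul_apply, Real.volume_Ioc, hG, hG]
    have h1 : (0:ℝ) ≤ F b - F a := sub_nonneg.2 (F.mono hab.le)
    have h2 : (0:ℝ) ≤ ((M : ℝ) * b - F b) - ((M : ℝ) * a - F a) := by
      have := hsub a b hab.le; linarith
    rw [← ENNReal.ofReal_add h1 h2]
    have h3 : (F b - F a) + (((M : ℝ) * b - F b) - ((M : ℝ) * a - F a)) = (M : ℝ) * (b - a) := by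
      ring
    rw [h3, ENNReal.ofReal_mul M.coe_nonneg, ENNReal.ofReal_coe_nnreal, smul_eq_mul]
  calc F.measure ≤ F.measure + G.measure := Measure.le_add_right le_rfl
    _ = (M : ℝ≥0∞) • (volume : Measure ℝ) := hext

/-- Convergence of Stieltjes integrals of a continuous compactly supported function, given
uniform convergence of the Lipschitz Stieltjes functions. -/
private lemma step_conv (M : ℝ≥0) (Kt : ℝ → StieltjesFunction ℝ) (K : StieltjesFunction ℝ)
    (hKtLip : ∀ t, LipschitzWith M (Kt t)) (hKLip : LipschitzWith M K)
    (hunif : TendstoUniformly (fun t => ((Kt t : ℝ → ℝ))) K (𝓝[≠] (0:ℝ)))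
    (g : ℝ → ℝ) (hgcont : Continuous g) (hgs : HasCompactSupport g)
    (a b : ℝ) (hab : a < b) :
    Tendsto (fun t => ∫ u in Set.Ioc a b, g u ∂(Kt t).measure) (𝓝[≠] (0:ℝ))
      (𝓝 (∫ u in Set.Ioc a b, g u ∂K.measure)) := by
  rw [Metric.tendsto_nhds]
  intro ε hε
  have hMba : (0:ℝ) ≤ (M : ℝ) * (b - a) := mul_nonneg M.coe_nonneg (by linarith)
  set ε₂ := ε / 3 / ((M : ℝ) * (b - a) + 1) with hε₂def
  have hε₂pos : 0 < ε₂ := by positivity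
  -- uniform continuity of g
  obtain ⟨d, hd, hgd⟩ := Metric.uniformContinuous_iff.mp
    (hgs.uniformContinuous_of_continuous hgcont) ε₂ hε₂pos
  -- choose partition size
  obtain ⟨n, hn⟩ := exists_nat_gt ((b - a) / d)
  have hn0 : 0 < (n : ℝ) := lt_of_le_of_lt (div_nonneg (by linarith) hd.le) hn
  have hstep : (b - a) / n < d := by
    rw [div_lt_iff₀ hn0]
    rw [div_lt_iff₀ hd] at hn
    linarith [hn]
  set h := (b - a) / n with hhdef
  have hhpos : 0 < h := div_pos (by linarith) hn0
  set p : ℕ → ℝ := fun i => a + i * h with hpdef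
  have hp : ∀ i : ℕ, p i = a + i * h := fun _ => rfl
  have hpmono : ∀ i j : ℕ, i ≤ j → p i ≤ p j := by
    intro i j hij
    rw [hp, hp]
    have : (i : ℝ) ≤ j := Nat.cast_le.2 hij
    nlinarith
  have hpsucc : ∀ i : ℕ, p i < p (i + 1) := by
    intro i
    rw [hp, hp]
    push_cast
    nlinarith
  have hpdiff : ∀ i : ℕ, p (i + 1) - p i = h := by
    intro i
    rw [hp, hp]
    push_cast
    ring
  have hp0 : p 0 = a := by simp [hp]
  have hpn : p n = b := by
    rw [hp, hhdef]
    field_simp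
    ring
  -- the partition covers Ioc a b
  have hunion : (⋃ i ∈ Finset.range n, Ioc (p i) (p (i + 1))) = Ioc a b := by
    have key : ∀ m : ℕ, (⋃ i ∈ Finset.range m, Ioc (p i) (p (i + 1))) = Ioc (p 0) (p m) := by
      intro m
      induction m with
      | zero => simp
      | succ k ih =>
        rw [Finset.range_add_one]
        rw [Finset.set_biUnion_insert, ih, Set.union_comm,
          Set.Ioc_union_Ioc_eq_Ioc (hpmono 0 k (Nat.zero_le _)) (hpsucc k).le]
    rw [key, hp0, hpn]
  have hdisj : (↑(Finset.range n) : Set ℕ).Pairwise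
      (Function.onFun Disjoint fun i => Ioc (p i) (p (i + 1))) := by
    intro i _ j _ hij
    rcases hij.lt_or_gt with hlt | hlt
    · exact Set.Ioc_disjoint_Ioc.2
        (min_le_of_left_le ((hpmono _ _ hlt).trans (le_max_right _ _)))
    · exact Set.Ioc_disjoint_Ioc.2
        (min_le_of_right_le ((hpmono _ _ hlt).trans (le_max_left _ _)))
  -- key estimate: Riemann–Stieltjes sums approximate the integral for any M-Lipschitz F
  have key : ∀ F : StieltjesFunction ℝ, LipschitzWith M F →
      |(∫ u in Ioc a b, g u ∂F.measure)
        - ∑ i ∈ Finset.range n, g (p (i + 1)) * (F (p (i + 1)) - F (p i))| ≤ ε / 3 := by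
    intro F hF
    have hfinIoc : ∀ x y : ℝ, F.measure (Ioc x y) ≠ ⊤ := fun x y => by
      rw [StieltjesFunction.measure_Ioc]; exact ENNReal.ofReal_ne_top
    have hginti : ∀ i ∈ Finset.range n, IntegrableOn g (Ioc (p i) (p (i + 1))) F.measure := by
      intro i _
      exact (hgcont.continuousOn.integrableOn_compact isCompact_Icc).mono_set
        Set.Ioc_subset_Icc_self
    have hsplit : (∫ u in Ioc a b, g u ∂F.measure)
        = ∑ i ∈ Finset.range n, ∫ u in Ioc (p i) (p (i + 1)), g u ∂F.measure := by
      rw [← hunion, integral_biUnion_finset _ (fun i _ => measurableSet_Ioc) hdisj hginti]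
    rw [hsplit, ← Finset.sum_sub_distrib]
    refine (Finset.abs_sum_le_sum_abs _ _).trans ?_
    have hterm : ∀ i ∈ Finset.range n,
        |(∫ u in Ioc (p i) (p (i + 1)), g u ∂F.measure)
          - g (p (i + 1)) * (F (p (i + 1)) - F (p i))|
          ≤ ε₂ * (F (p (i + 1)) - F (p i)) := by
      intro i hi
      have hple := (hpsucc i).le
      have hFd : (0:ℝ) ≤ F (p (i + 1)) - F (p i) := sub_nonneg.2 (F.mono hple)
      have hmeas : (F.measure (Ioc (p i) (p (i + 1)))).toReal = F (p (i + 1)) - F (p i) := by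
        rw [StieltjesFunction.measure_Ioc, ENNReal.toReal_ofReal hFd]
      have hconst : (∫ _u in Ioc (p i) (p (i + 1)), g (p (i + 1)) ∂F.measure)
          = g (p (i + 1)) * (F (p (i + 1)) - F (p i)) := by
        rw [setIntegral_const, measureReal_def, hmeas, smul_eq_mul, mul_comm]
      rw [← hconst,
        ← integral_sub (hginti i hi)
          (integrableOn_const (hfinIoc _ _))]
      have := norm_setIntegral_le_of_norm_le_const (f := fun u => g u - g (p (i + 1)))
        (s := Ioc (p i) (p (i + 1)))
        (μ := F.measure) (hfinIoc _ _).lt_top (C := ε₂) ?_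
      · rw [Real.norm_eq_abs] at this
        rw [measureReal_def, hmeas] at this
        exact this
      · intro x hx
        rw [Real.norm_eq_abs, ← Real.dist_eq]
        refine (hgd ?_).le
        rw [Real.dist_eq]
        have hx1 := hx.1
        have hx2 := hx.2
        have : |x - p (i + 1)| = p (i + 1) - x := by
          rw [abs_of_nonpos (by linarith)]; ring
        rw [this]
        have := hpdiff i
        calc p (i + 1) - x < p (i + 1) - p i := by linarith
          _ = h := hpdiff i
          _ < d := hstep
    refine (Finset.sum_le_sum hterm).trans ?_
    rw [← Finset.mul_sum]
    have htel : ∑ i ∈ Finset.range n, (F (p (i + 1)) - F (p i)) = F (p n) - F (p 0) :=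
      Finset.sum_range_sub (fun i => F (p i)) n
    rw [htel, hp0, hpn]
    have hFab : F b - F a ≤ (M : ℝ) * (b - a) := by
      have hlip := hF.dist_le_mul b a
      rw [Real.dist_eq, Real.dist_eq] at hlip
      have h2 : |b - a| = b - a := abs_of_nonneg (by linarith)
      rw [h2] at hlip
      exact (le_abs_self _).trans hlip
    calc ε₂ * (F b - F a) ≤ ε₂ * ((M : ℝ) * (b - a)) :=
          mul_le_mul_of_nonneg_left hFab hε₂pos.le
      _ ≤ ε / 3 := by
          rw [hε₂def]
          rw [div_mul_eq_mul_div, div_le_iff₀ (by positivity)]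
          nlinarith [hε.le]
  -- convergence of the Riemann–Stieltjes sums
  have hsum : Tendsto
      (fun t => ∑ i ∈ Finset.range n, g (p (i + 1)) * ((Kt t) (p (i + 1)) - (Kt t) (p i)))
      (𝓝[≠] (0:ℝ))
      (𝓝 (∑ i ∈ Finset.range n, g (p (i + 1)) * (K (p (i + 1)) - K (p i)))) := by
    refine tendsto_finset_sum _ (fun i _ => ?_)
    exact tendsto_const_nhds.mul ((hunif.tendsto_at _).sub (hunif.tendsto_at _))
  filter_upwards [Metric.tendsto_nhds.mp hsum (ε / 3) (by positivity)] with t ht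
  rw [Real.dist_eq] at ht ⊢
  have e1 := key (Kt t) (hKtLip t)
  have e2 := key K hKLip
  set At := ∫ u in Ioc a b, g u ∂(Kt t).measure
  set A := ∫ u in Ioc a b, g u ∂K.measure
  set St := ∑ i ∈ Finset.range n, g (p (i + 1)) * ((Kt t) (p (i + 1)) - (Kt t) (p i))
  set S := ∑ i ∈ Finset.range n, g (p (i + 1)) * (K (p (i + 1)) - K (p i))
  have tri1 : |At - A| ≤ |At - St| + |St - A| := abs_sub_le _ _ _
  have tri2 : |St - A| ≤ |St - S| + |S - A| := abs_sub_le _ _ _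
  have hSA : |S - A| = |A - S| := abs_sub_comm _ _
  linarith

theorem stmt15 (M : ℝ≥0) (Kt : ℝ → StieltjesFunction ℝ) (K : StieltjesFunction ℝ)
    (hKtLip : ∀ t, LipschitzWith M (Kt t)) (hKLip : LipschitzWith M K)
    (hunif : TendstoUniformly (fun t => ((Kt t : ℝ → ℝ))) K (𝓝[≠] (0:ℝ)))
    (z : ℝ → ℝ) (hzm : Measurable z) (C : ℝ) (hzb : ∀ u, |z u| ≤ C)
    (δ : ℝ) (hδ : δ ∈ Set.Ioo (0:ℝ) (1/2))
    (hladcag : ∀ x ∈ Set.Icc δ (1 - δ),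
      Tendsto z (𝓝[<] x) (𝓝 (z x)) ∧ ∃ L, Tendsto z (𝓝[>] x) (𝓝 L)) :
    Tendsto (fun t => (∫ u in Set.Ioc δ (1 - δ), z u ∂(Kt t).measure)
        - ∫ u in Set.Ioc δ (1 - δ), z u ∂K.measure) (𝓝[≠] (0:ℝ)) (𝓝 0) := by
  obtain ⟨hδ0, hδhalf⟩ := hδ
  have hab : δ < 1 - δ := by linarith
  have hC0 : (0:ℝ) ≤ C := (abs_nonneg _).trans (hzb 0)
  rw [Metric.tendsto_nhds]
  intro ε hε
  set ε₁ := ε / 3 / ((M : ℝ) + 1) with hε₁def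
  have hε₁pos : 0 < ε₁ := by positivity
  -- z is integrable on the interval w.r.t. Lebesgue
  haveI hfinvol : IsFiniteMeasure ((volume : Measure ℝ).restrict (Ioc δ (1 - δ))) := by
    constructor
    rw [Measure.restrict_apply_univ, Real.volume_Ioc]
    exact ENNReal.ofReal_lt_top
  have hzint : IntegrableOn z (Ioc δ (1 - δ)) volume := by
    refine ⟨hzm.aestronglyMeasurable, ?_⟩
    exact HasFiniteIntegral.of_bounded (C := C)
      (ae_of_all _ fun u => by rw [Real.norm_eq_abs]; exact hzb u)
  have hind : Integrable ((Ioc δ (1 - δ)).indicator z) volume :=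
    hzint.integrable_indicator measurableSet_Ioc
  obtain ⟨g, hgs, hgclose, hgcont, hgint⟩ :=
    hind.exists_hasCompactSupport_integral_sub_le hε₁pos
  -- closeness of ∫z and ∫g for any measure dominated by M • volume
  have hbnd : ∀ F : StieltjesFunction ℝ, F.measure ≤ (M : ℝ≥0∞) • (volume : Measure ℝ) →
      |(∫ u in Ioc δ (1 - δ), z u ∂F.measure) - ∫ u in Ioc δ (1 - δ), g u ∂F.measure|
        ≤ ε / 3 := by
    intro F hdom
    haveI : IsFiniteMeasure (F.measure.restrict (Ioc δ (1 - δ))) := by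
      constructor
      rw [Measure.restrict_apply_univ, StieltjesFunction.measure_Ioc]
      exact ENNReal.ofReal_lt_top
    have hzF : IntegrableOn z (Ioc δ (1 - δ)) F.measure := by
      refine ⟨hzm.aestronglyMeasurable, ?_⟩
      exact HasFiniteIntegral.of_bounded (C := C)
        (ae_of_all _ fun u => by rw [Real.norm_eq_abs]; exact hzb u)
    have hgF : IntegrableOn g (Ioc δ (1 - δ)) F.measure :=
      (hgcont.continuousOn.integrableOn_compact isCompact_Icc).mono_set
        Set.Ioc_subset_Icc_self
    rw [← integral_sub hzF hgF]
    have h1 : ‖∫ u in Ioc δ (1 - δ), (z u - g u) ∂F.measure‖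
        ≤ (∫⁻ u in Ioc δ (1 - δ), ENNReal.ofReal ‖z u - g u‖ ∂F.measure).toReal :=
      norm_integral_le_lintegral_norm _
    have h2 : (∫⁻ u in Ioc δ (1 - δ), ENNReal.ofReal ‖z u - g u‖ ∂F.measure)
        ≤ (M : ℝ≥0∞) *
          ∫⁻ u, ENNReal.ofReal ‖(Ioc δ (1 - δ)).indicator z u - g u‖ ∂volume := by
      calc (∫⁻ u in Ioc δ (1 - δ), ENNReal.ofReal ‖z u - g u‖ ∂F.measure)
          ≤ ∫⁻ u in Ioc δ (1 - δ), ENNReal.ofReal ‖z u - g u‖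
              ∂((M : ℝ≥0∞) • (volume : Measure ℝ)) :=
            lintegral_mono' (Measure.restrict_mono subset_rfl hdom) le_rfl
        _ = (M : ℝ≥0∞) * ∫⁻ u in Ioc δ (1 - δ), ENNReal.ofReal ‖z u - g u‖ ∂volume := by
            rw [Measure.restrict_smul, lintegral_smul_measure, smul_eq_mul]
        _ = (M : ℝ≥0∞) * ∫⁻ u in Ioc δ (1 - δ),
              ENNReal.ofReal ‖(Ioc δ (1 - δ)).indicator z u - g u‖ ∂volume := by
            congr 1
            refine setLIntegral_congr_fun measurableSet_Ioc (fun u hu => ?_)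
            rw [Set.indicator_of_mem hu]
        _ ≤ (M : ℝ≥0∞) *
              ∫⁻ u, ENNReal.ofReal ‖(Ioc δ (1 - δ)).indicator z u - g u‖ ∂volume :=
            mul_le_mul_right (setLIntegral_le_lintegral _ _) _
    have h3 : (∫⁻ u, ENNReal.ofReal ‖(Ioc δ (1 - δ)).indicator z u - g u‖ ∂volume)
        = ENNReal.ofReal (∫ u, ‖(Ioc δ (1 - δ)).indicator z u - g u‖ ∂volume) :=
      (ofReal_integral_eq_lintegral_ofReal (hind.sub hgint).norm
        (ae_of_all _ fun u => norm_nonneg _)).symm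
    have h4 : ((M : ℝ≥0∞) *
        ENNReal.ofReal (∫ u, ‖(Ioc δ (1 - δ)).indicator z u - g u‖ ∂volume)).toReal
        = (M : ℝ) * ∫ u, ‖(Ioc δ (1 - δ)).indicator z u - g u‖ ∂volume := by
      rw [ENNReal.toReal_mul, ENNReal.coe_toReal, ENNReal.toReal_ofReal
        (integral_nonneg fun u => norm_nonneg _)]
    have h5 : (∫⁻ u in Ioc δ (1 - δ), ENNReal.ofReal ‖z u - g u‖ ∂F.measure).toReal
        ≤ (M : ℝ) * ∫ u, ‖(Ioc δ (1 - δ)).indicator z u - g u‖ ∂volume := by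
      rw [← h4]
      refine ENNReal.toReal_mono ?_ (by rw [← h3]; exact h2)
      exact ENNReal.mul_ne_top ENNReal.coe_ne_top ENNReal.ofReal_ne_top
    have h6 : (M : ℝ) * ∫ u, ‖(Ioc δ (1 - δ)).indicator z u - g u‖ ∂volume
        ≤ (M : ℝ) * ε₁ := mul_le_mul_of_nonneg_left hgclose M.coe_nonneg
    have h7 : (M : ℝ) * ε₁ ≤ ε / 3 := by
      rw [hε₁def, div_div, mul_div_assoc']
      rw [div_le_div_iff₀ (by positivity) (by norm_num)]
      nlinarith [hε.le, M.coe_nonneg]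
    rw [Real.norm_eq_abs] at h1
    linarith
  have hmid := step_conv M Kt K hKtLip hKLip hunif g hgcont hgs δ (1 - δ) hab
  filter_upwards [Metric.tendsto_nhds.mp hmid (ε / 3) (by positivity)] with t ht
  rw [Real.dist_eq, sub_zero]
  rw [Real.dist_eq] at ht
  have e1 := hbnd (Kt t) (stieltjes_lip_le M (Kt t) (hKtLip t))
  have e2 := hbnd K (stieltjes_lip_le M K hKLip)
  set At := ∫ u in Ioc δ (1 - δ), z u ∂(Kt t).measure
  set A := ∫ u in Ioc δ (1 - δ), z u ∂K.measure
  set Bt := ∫ u in Ioc δ (1 - δ), g u ∂(Kt t).measure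
  set B := ∫ u in Ioc δ (1 - δ), g u ∂K.measure
  have tri1 : |At - A| ≤ |At - Bt| + |Bt - A| := abs_sub_le _ _ _
  have tri2 : |Bt - A| ≤ |Bt - B| + |B - A| := abs_sub_le _ _ _
  have hBA : |B - A| = |A - B| := abs_sub_comm _ _
  linarith
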